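/- Let (ξ_i)_{i≥1} be i.i.d. ℕ-valued random variables on a probability space (Ω, P) with E[ξ₁] = 1 and E[ξ₁²] < ∞, set σ² = Var(ξ₁) and S_n = ∑_{i=1}^n ξ_i. Assume that P(S_n = n−1) > 0 for all sufficiently large n and that for every measurable g : ℕ × ℕ → ℝ such that g(ξ₁, ξ₂) is integrable, E[g(ξ₁, ξ₂) | S_n = n−1] → E[g(ξ₁, ξ₂)] as n → ∞. Then for every fixed integer k ≥ 1, the truncated conditional fourth-moment quantity Q(n,k) = E[ ( (1/n)·∑_{i=1}^n (ξ_i·1_{ξ_i≤k} − 1 + 1/n)² − σ² )² ; given S_n = n−1 ] converges, as n → ∞, to ( E[(ξ₁·1_{ξ₁≤k} − 1)²] − σ² )². -/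

import Mathlib

open MeasureTheory ProbabilityTheory Filter


lemma my_integrable_of_bounded {Ω : Type*} [MeasurableSpace Ω] (ν : Measure Ω)
    [IsFiniteMeasure ν] {f : Ω → ℝ} (hf : Measurable f) {C : ℝ} (h : ∀ ω, |f ω| ≤ C) :
    Integrable f ν :=
  ⟨hf.aestronglyMeasurable, HasFiniteIntegral.of_bounded (C := C)
    (ae_of_all _ (by simpa [Real.norm_eq_abs] using h))⟩

lemma my_abs_sum_le {n : ℕ} (x : ℕ → ℝ) {M : ℝ}
    (h : ∀ i ∈ Finset.range n, |x i| ≤ M) :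
    |∑ i ∈ Finset.range n, x i| ≤ n * M := by
  calc |∑ i ∈ Finset.range n, x i| ≤ ∑ i ∈ Finset.range n, |x i| :=
        Finset.abs_sum_le_sum_abs _ _
    _ ≤ ∑ _i ∈ Finset.range n, M := Finset.sum_le_sum h
    _ = n * M := by simp [Finset.sum_const, nsmul_eq_mul]

lemma my_jointLaw {Ω : Type*} [MeasurableSpace Ω] (P : Measure Ω) [IsProbabilityMeasure P]
    (ξ : ℕ → Ω → ℕ) (hmeas : ∀ i, Measurable (ξ i))
    (hindep : iIndepFun ξ P)
    (hident : ∀ i, Measure.map (ξ i) P = Measure.map (ξ 0) P) (n : ℕ) :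
    P.map (fun ω (t : Fin n) => ξ t ω) = Measure.pi (fun _ => P.map (ξ 0)) := by
  classical
  have hX : Measurable (fun ω (t : Fin n) => ξ t ω) :=
    measurable_pi_lambda _ fun t => hmeas t
  refine (Measure.pi_eq fun s hs => ?_).symm
  rw [Measure.map_apply hX (MeasurableSet.univ_pi hs)]
  set s' : ℕ → Set ℕ := fun i => if h : i < n then s ⟨i, h⟩ else Set.univ with hs'
  have hs'm : ∀ i, MeasurableSet (s' i) := by
    intro i
    by_cases h : i < n
    · simpa [hs', h] using hs ⟨i, h⟩
    · simp [hs', h]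
  have hpre : (fun ω (t : Fin n) => ξ t ω) ⁻¹' Set.pi Set.univ s
      = ⋂ i ∈ Finset.range n, ξ i ⁻¹' s' i := by
    ext ω
    simp only [Set.mem_preimage, Set.mem_univ_pi, Set.mem_iInter, Finset.mem_range]
    constructor
    · intro h i hi
      simpa [hs', hi] using h ⟨i, hi⟩
    · intro h t
      simpa [hs', t.isLt] using h t.val t.isLt
  rw [hpre, hindep.measure_inter_preimage_eq_mul (Finset.range n) (fun i _ => hs'm i)]
  rw [← Fin.prod_univ_eq_prod_range (fun i => P (ξ i ⁻¹' s' i)) n]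
  refine Finset.prod_congr rfl fun t _ => ?_
  have h1 : s' t.val = s t := by simp [hs', t.isLt]
  rw [← hident t, Measure.map_apply (hmeas t) (hs t), h1]

lemma my_exch {Ω : Type*} [MeasurableSpace Ω] (P : Measure Ω) [IsProbabilityMeasure P]
    (ξ : ℕ → Ω → ℕ) (hmeas : ∀ i, Measurable (ξ i))
    (hindep : iIndepFun ξ P)
    (hident : ∀ i, Measure.map (ξ i) P = Measure.map (ξ 0) P)
    (hjoint : ∀ n : ℕ, P.map (fun ω (t : Fin n) => ξ t ω)
        = Measure.pi (fun _ => P.map (ξ 0)))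
    (n i j : ℕ) (hi : i < n) (hj : j < n) (hij : i ≠ j)
    (f : ℕ → ℕ → ℝ) :
    ∫ ω in {ω | ∑ t ∈ Finset.range n, ξ t ω = n - 1}, f (ξ i ω) (ξ j ω) ∂P
      = ∫ ω in {ω | ∑ t ∈ Finset.range n, ξ t ω = n - 1}, f (ξ 0 ω) (ξ 1 ω) ∂P := by
  classical
  have hn2 : 2 ≤ n := by omega
  set μ0 := P.map (ξ 0) with hμ0
  have : IsProbabilityMeasure μ0 := Measure.isProbabilityMeasure_map (hmeas 0).aemeasurable
  set X : Ω → (Fin n → ℕ) := fun ω t => ξ t ω with hXdef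
  have hX : Measurable X := measurable_pi_lambda _ fun t => hmeas t
  set B : Set (Fin n → ℕ) := {x | ∑ t, x t = n - 1} with hBdef
  have hB : MeasurableSet B := by
    have hsum : Measurable (fun x : Fin n → ℕ => ∑ t, x t) := by
      exact Finset.measurable_sum _ fun t _ => measurable_pi_apply t
    exact hsum (measurableSet_singleton (n - 1))
  have hAB : {ω | ∑ t ∈ Finset.range n, ξ t ω = n - 1} = X ⁻¹' B := by
    ext ω
    simp only [Set.mem_setOf_eq, Set.mem_preimage, hBdef, hXdef]
    rw [Fin.sum_univ_eq_sum_range (fun t => ξ t ω) n]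
  -- indices in Fin n
  set i' : Fin n := ⟨i, hi⟩
  set j' : Fin n := ⟨j, hj⟩
  set z : Fin n := ⟨0, by omega⟩
  set o : Fin n := ⟨1, by omega⟩
  have hij' : j' ≠ i' := by simp [i', j', Fin.ext_iff]; omega
  have hzo : z ≠ o := by simp [z, o, Fin.ext_iff]
  set τ : Equiv.Perm (Fin n) := Equiv.swap i' z with hτ
  have hτj : τ j' ≠ z := by
    by_cases h : j' = z
    · rw [h, hτ, Equiv.swap_apply_right]
      rw [← h]; exact fun hc => hij' hc.symm
    · rw [hτ, Equiv.swap_apply_of_ne_of_ne hij' h]; exact h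
  set σ : Equiv.Perm (Fin n) := τ.trans (Equiv.swap (τ j') o) with hσ
  have hσi : σ i' = z := by
    rw [hσ]; simp only [Equiv.trans_apply]
    rw [hτ, Equiv.swap_apply_left]
    exact Equiv.swap_apply_of_ne_of_ne (fun hc => hτj hc.symm) hzo
  have hσj : σ j' = o := by
    rw [hσ]; simp only [Equiv.trans_apply]
    exact Equiv.swap_apply_left _ _
  -- the measurable equiv
  set T : (Fin n → ℕ) ≃ᵐ (Fin n → ℕ) :=
    MeasurableEquiv.arrowCongr' σ (MeasurableEquiv.refl ℕ) with hT
  have hTapp : ∀ (x : Fin n → ℕ) (t : Fin n), T x t = x (σ.symm t) := by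
    intro x t
    simp [hT, MeasurableEquiv.arrowCongr', Equiv.arrowCongr', Equiv.arrowCongr]
  have hTpres : MeasurePreserving T (Measure.pi fun _ : Fin n => μ0)
      (Measure.pi fun _ : Fin n => μ0) := by
    exact measurePreserving_arrowCongr' (fun _ => μ0) (fun _ => μ0) σ
      (MeasurableEquiv.refl ℕ) (fun _ => MeasurePreserving.id μ0)
  have hTB : T ⁻¹' B = B := by
    ext x
    simp only [Set.mem_preimage, hBdef, Set.mem_setOf_eq]
    have : ∑ t, T x t = ∑ t, x t := by
      rw [Finset.sum_congr rfl fun t _ => hTapp x t]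
      exact Equiv.sum_comp σ.symm x
    rw [this]
  -- measurability of the integrands on the product space
  have hfm : ∀ a b : Fin n, Measurable (fun x : Fin n → ℕ => f (x a) (x b)) :=
    fun a b => measurable_of_countable _
  have key : ∀ a b : Fin n,
      ∫ ω in X ⁻¹' B, f (ξ a.val ω) (ξ b.val ω) ∂P
        = ∫ x in B, f (x a) (x b) ∂(Measure.pi fun _ : Fin n => μ0) := by
    intro a b
    rw [← hjoint n]
    rw [setIntegral_map hB ((hfm a b).aestronglyMeasurable) hX.aemeasurable]
  rw [hAB, key i' j', key z o]
  -- change of variables by T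
  have := setIntegral_map (μ := Measure.pi fun _ : Fin n => μ0) (g := T)
    (f := fun x => f (x z) (x o)) hB ((hfm z o).aestronglyMeasurable.mono_measure
      (le_of_eq (by rw [hTpres.map_eq]))) (T.measurable.aemeasurable)
  rw [hTpres.map_eq, hTB] at this
  rw [this]
  refine integral_congr_ae (ae_of_all _ fun x => ?_)
  show f (x i') (x j') = f (T x z) (T x o)
  rw [hTapp x z, hTapp x o, (Equiv.symm_apply_eq σ).mpr hσi.symm, (Equiv.symm_apply_eq σ).mpr hσj.symm]

lemma my_step {Ω : Type*} [MeasurableSpace Ω] (ν : Measure Ω) [IsProbabilityMeasure ν]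
    (ξ : ℕ → Ω → ℕ) (hmeas : ∀ i, Measurable (ξ i))
    (φ : ℕ → ℝ) (hφm : Measurable φ) (k : ℕ) (hk1 : (1:ℝ) ≤ (k:ℝ))
    (hφ_bd : ∀ x, |φ x - 1| ≤ (k:ℝ))
    (σ2 : ℝ) (n : ℕ) (hn2 : 2 ≤ n)
    (hexch : ∀ f : ℕ → ℕ → ℝ, ∀ i j : ℕ, i < n → j < n → i ≠ j →
      ∫ ω, f (ξ i ω) (ξ j ω) ∂ν = ∫ ω, f (ξ 0 ω) (ξ 1 ω) ∂ν) :
    |(∫ ω, ((1/(n:ℝ)) * ∑ i ∈ Finset.range n, (φ (ξ i ω) - 1 + 1/(n:ℝ))^2 - σ2)^2 ∂ν)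
      - ((1/(n:ℝ)) * (∫ ω, (φ (ξ 0 ω) - 1)^2 * (φ (ξ 0 ω) - 1)^2 ∂ν)
         + (1 - 1/(n:ℝ)) * (∫ ω, (φ (ξ 0 ω) - 1)^2 * (φ (ξ 1 ω) - 1)^2 ∂ν)
         - 2*σ2*(∫ ω, (φ (ξ 0 ω) - 1)^2 ∂ν) + σ2^2)|
      ≤ ((2*(k:ℝ)+1) * (((k:ℝ)+1)^2 + (k:ℝ)^2 + 2*|σ2|)) / (n:ℝ) := by
  have hn0 : (0:ℝ) < (n:ℝ) := by exact_mod_cast (by omega : 0 < n)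
  have h1n : (1:ℝ) ≤ (n:ℝ) := by exact_mod_cast (by omega : 1 ≤ n)
  have hinv0 : (0:ℝ) < 1/(n:ℝ) := by positivity
  have hinv1 : 1/(n:ℝ) ≤ 1 := by rw [div_le_one hn0]; exact h1n
  set Z : ℕ → Ω → ℝ := fun i ω => (φ (ξ i ω) - 1)^2 with hZ
  set p : Ω → ℝ := fun ω => (1/(n:ℝ)) * ∑ i ∈ Finset.range n, (φ (ξ i ω) - 1 + 1/(n:ℝ))^2
    with hpdef
  set q : Ω → ℝ := fun ω => (1/(n:ℝ)) * ∑ i ∈ Finset.range n, Z i ω with hqdef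
  show |(∫ ω, (p ω - σ2)^2 ∂ν)
      - ((1/(n:ℝ)) * (∫ ω, Z 0 ω * Z 0 ω ∂ν)
         + (1 - 1/(n:ℝ)) * (∫ ω, Z 0 ω * Z 1 ω ∂ν)
         - 2*σ2*(∫ ω, Z 0 ω ∂ν) + σ2^2)|
      ≤ ((2*(k:ℝ)+1) * (((k:ℝ)+1)^2 + (k:ℝ)^2 + 2*|σ2|)) / (n:ℝ)
  have hZm : ∀ i, Measurable (Z i) :=
    fun i => ((hφm.comp (hmeas i)).sub measurable_const).pow_const 2
  have hZbd : ∀ i ω, |Z i ω| ≤ (k:ℝ)^2 := fun i ω => by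
    show |(φ (ξ i ω) - 1)^2| ≤ _
    calc |(φ (ξ i ω) - 1)^2| = |φ (ξ i ω) - 1|^2 := by
          rw [abs_of_nonneg (sq_nonneg _), sq_abs]
      _ ≤ (k:ℝ)^2 := pow_le_pow_left₀ (abs_nonneg _) (hφ_bd _) 2
  have hterm_m : ∀ i : ℕ, Measurable fun ω => (φ (ξ i ω) - 1 + 1/(n:ℝ))^2 := fun i =>
    (((hφm.comp (hmeas i)).sub measurable_const).add measurable_const).pow_const 2
  have hpm : Measurable p := by
    rw [hpdef]; exact (Finset.measurable_sum _ fun i _ => hterm_m i).const_mul _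
  have hqm : Measurable q := by
    rw [hqdef]; exact (Finset.measurable_sum _ fun i _ => hZm i).const_mul _
  have hterm_bd : ∀ i ω, |(φ (ξ i ω) - 1 + 1/(n:ℝ))^2| ≤ ((k:ℝ)+1)^2 := by
    intro i ω
    have h1 : |φ (ξ i ω) - 1 + 1/(n:ℝ)| ≤ (k:ℝ) + 1 := by
      calc |φ (ξ i ω) - 1 + 1/(n:ℝ)| ≤ |φ (ξ i ω) - 1| + |1/(n:ℝ)| := abs_add_le _ _
        _ ≤ (k:ℝ) + 1 := add_le_add (hφ_bd _) (by rw [abs_of_nonneg hinv0.le]; exact hinv1)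
    calc |(φ (ξ i ω) - 1 + 1/(n:ℝ))^2| = |φ (ξ i ω) - 1 + 1/(n:ℝ)|^2 := by
          rw [abs_of_nonneg (sq_nonneg _), sq_abs]
      _ ≤ ((k:ℝ)+1)^2 := pow_le_pow_left₀ (abs_nonneg _) h1 2
  have hp_bd : ∀ ω, |p ω| ≤ ((k:ℝ)+1)^2 := by
    intro ω
    show |(1/(n:ℝ)) * ∑ i ∈ Finset.range n, (φ (ξ i ω) - 1 + 1/(n:ℝ))^2| ≤ _
    rw [abs_mul, abs_of_nonneg hinv0.le]
    calc (1/(n:ℝ)) * |∑ i ∈ Finset.range n, (φ (ξ i ω) - 1 + 1/(n:ℝ))^2|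
        ≤ (1/(n:ℝ)) * ((n:ℝ) * ((k:ℝ)+1)^2) :=
          mul_le_mul_of_nonneg_left (my_abs_sum_le _ (fun i _ => hterm_bd i ω)) hinv0.le
      _ = ((k:ℝ)+1)^2 := by field_simp
  have hq_bd : ∀ ω, |q ω| ≤ (k:ℝ)^2 := by
    intro ω
    show |(1/(n:ℝ)) * ∑ i ∈ Finset.range n, Z i ω| ≤ _
    rw [abs_mul, abs_of_nonneg hinv0.le]
    calc (1/(n:ℝ)) * |∑ i ∈ Finset.range n, Z i ω|
        ≤ (1/(n:ℝ)) * ((n:ℝ) * (k:ℝ)^2) :=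
          mul_le_mul_of_nonneg_left (my_abs_sum_le _ (fun i _ => hZbd i ω)) hinv0.le
      _ = (k:ℝ)^2 := by field_simp
  have hpq : ∀ ω, |p ω - q ω| ≤ (2*(k:ℝ)+1)/(n:ℝ) := by
    intro ω
    have hdiff : p ω - q ω = (1/(n:ℝ)) * ∑ i ∈ Finset.range n,
        ((φ (ξ i ω) - 1 + 1/(n:ℝ))^2 - (φ (ξ i ω) - 1)^2) := by
      show (1/(n:ℝ)) * ∑ i ∈ Finset.range n, (φ (ξ i ω) - 1 + 1/(n:ℝ))^2
          - (1/(n:ℝ)) * ∑ i ∈ Finset.range n, Z i ω = _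
      rw [Finset.sum_sub_distrib]
      show _ = (1/(n:ℝ)) * (∑ i ∈ Finset.range n, (φ (ξ i ω) - 1 + 1/(n:ℝ))^2
               - ∑ i ∈ Finset.range n, Z i ω)
      ring
    rw [hdiff, abs_mul, abs_of_nonneg hinv0.le]
    have hsum : |∑ i ∈ Finset.range n,
        ((φ (ξ i ω) - 1 + 1/(n:ℝ))^2 - (φ (ξ i ω) - 1)^2)|
        ≤ (n:ℝ) * ((2*(k:ℝ)+1) * (1/(n:ℝ))) := by
      apply my_abs_sum_le
      intro i _
      have h1 : (φ (ξ i ω) - 1 + 1/(n:ℝ))^2 - (φ (ξ i ω) - 1)^2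
          = (2*(φ (ξ i ω) - 1) + 1/(n:ℝ)) * (1/(n:ℝ)) := by ring
      rw [h1, abs_mul, abs_of_nonneg hinv0.le]
      apply mul_le_mul_of_nonneg_right _ hinv0.le
      calc |2*(φ (ξ i ω) - 1) + 1/(n:ℝ)|
          ≤ |2*(φ (ξ i ω) - 1)| + |1/(n:ℝ)| := abs_add_le _ _
        _ ≤ 2*(k:ℝ) + 1 := by
            have h2 : |2*(φ (ξ i ω) - 1)| = 2 * |φ (ξ i ω) - 1| := by
              rw [abs_mul]; norm_num
            rw [h2, abs_of_nonneg hinv0.le]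
            have := hφ_bd (ξ i ω)
            nlinarith
    calc (1/(n:ℝ)) * |∑ i ∈ Finset.range n,
          ((φ (ξ i ω) - 1 + 1/(n:ℝ))^2 - (φ (ξ i ω) - 1)^2)|
        ≤ (1/(n:ℝ)) * ((n:ℝ) * ((2*(k:ℝ)+1) * (1/(n:ℝ)))) :=
          mul_le_mul_of_nonneg_left hsum hinv0.le
      _ = (2*(k:ℝ)+1)/(n:ℝ) := by field_simp
  have habs2 : ∀ (x M : ℝ), |x| ≤ M → |(x - σ2)^2| ≤ (M + |σ2|)^2 := by
    intro x M hx
    calc |(x - σ2)^2| = |x - σ2|^2 := by rw [abs_of_nonneg (sq_nonneg _), sq_abs]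
      _ ≤ (M + |σ2|)^2 := by
          apply pow_le_pow_left₀ (abs_nonneg _)
          calc |x - σ2| ≤ |x| + |σ2| := abs_sub _ _
            _ ≤ M + |σ2| := add_le_add hx le_rfl
  have hint1 : Integrable (fun ω => (p ω - σ2)^2) ν :=
    my_integrable_of_bounded ν ((hpm.sub measurable_const).pow_const 2)
      (fun ω => habs2 _ _ (hp_bd ω))
  have hint2 : Integrable (fun ω => (q ω - σ2)^2) ν :=
    my_integrable_of_bounded ν ((hqm.sub measurable_const).pow_const 2)
      (fun ω => habs2 _ _ (hq_bd ω))
  have part1 : |(∫ ω, (p ω - σ2)^2 ∂ν) - (∫ ω, (q ω - σ2)^2 ∂ν)|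
      ≤ ((2*(k:ℝ)+1) * (((k:ℝ)+1)^2 + (k:ℝ)^2 + 2*|σ2|)) / (n:ℝ) := by
    rw [← integral_sub hint1 hint2]
    have hbd : ∀ ω, ‖(p ω - σ2)^2 - (q ω - σ2)^2‖
        ≤ ((2*(k:ℝ)+1) * (((k:ℝ)+1)^2 + (k:ℝ)^2 + 2*|σ2|)) / (n:ℝ) := by
      intro ω
      rw [Real.norm_eq_abs]
      have h1 : (p ω - σ2)^2 - (q ω - σ2)^2 = (p ω - q ω) * (p ω + q ω - 2*σ2) := by ring
      rw [h1, abs_mul]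
      have h2 : |p ω + q ω - 2*σ2| ≤ ((k:ℝ)+1)^2 + (k:ℝ)^2 + 2*|σ2| := by
        have h3 : |2*σ2| = 2*|σ2| := by rw [abs_mul]; norm_num
        calc |p ω + q ω - 2*σ2| ≤ |p ω + q ω| + |2*σ2| := abs_sub _ _
          _ ≤ (|p ω| + |q ω|) + |2*σ2| := add_le_add (abs_add_le _ _) le_rfl
          _ ≤ ((k:ℝ)+1)^2 + (k:ℝ)^2 + 2*|σ2| := by
              rw [h3]
              have := hp_bd ω; have := hq_bd ω
              linarith
      calc |p ω - q ω| * |p ω + q ω - 2*σ2|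
          ≤ ((2*(k:ℝ)+1)/(n:ℝ)) * (((k:ℝ)+1)^2 + (k:ℝ)^2 + 2*|σ2|) := by
            apply mul_le_mul (hpq ω) h2 (abs_nonneg _) (by positivity)
        _ = ((2*(k:ℝ)+1) * (((k:ℝ)+1)^2 + (k:ℝ)^2 + 2*|σ2|)) / (n:ℝ) := by ring
    have hfin := norm_integral_le_of_norm_le_const (μ := ν) (ae_of_all _ hbd)
    simpa [measure_univ, Real.norm_eq_abs] using hfin
  -- part 2 : exact expansion
  have hiZ1 : ∀ i, Integrable (Z i) ν := fun i =>
    my_integrable_of_bounded ν (hZm i) (hZbd i)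
  have hiZ2 : ∀ i j, Integrable (fun ω => Z i ω * Z j ω) ν := fun i j =>
    my_integrable_of_bounded ν ((hZm i).mul (hZm j)) (C := (k:ℝ)^2*(k:ℝ)^2) (fun ω => by
      rw [abs_mul]
      exact mul_le_mul (hZbd i ω) (hZbd j ω) (abs_nonneg _) (by positivity))
  have hqint : Integrable q ν := my_integrable_of_bounded ν hqm hq_bd
  have hqqint : Integrable (fun ω => q ω * q ω) ν :=
    my_integrable_of_bounded ν (hqm.mul hqm) (C := (k:ℝ)^2*(k:ℝ)^2) (fun ω => by
      rw [abs_mul]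
      exact mul_le_mul (hq_bd ω) (hq_bd ω) (abs_nonneg _) (by positivity))
  have hc_i : ∀ i, i < n → (∫ ω, Z i ω ∂ν) = ∫ ω, Z 0 ω ∂ν := by
    intro i hi
    rcases Nat.eq_zero_or_pos i with h0 | h0
    · rw [h0]
    · exact hexch (fun x _ => (φ x - 1)^2) i 0 hi (by omega) (by omega)
  have ha_i : ∀ i, i < n → (∫ ω, Z i ω * Z i ω ∂ν) = ∫ ω, Z 0 ω * Z 0 ω ∂ν := by
    intro i hi
    rcases Nat.eq_zero_or_pos i with h0 | h0
    · rw [h0]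
    · exact hexch (fun x _ => (φ x - 1)^2 * (φ x - 1)^2) i 0 hi (by omega) (by omega)
  have hb_ij : ∀ i j, i < n → j < n → i ≠ j →
      (∫ ω, Z i ω * Z j ω ∂ν) = ∫ ω, Z 0 ω * Z 1 ω ∂ν := by
    intro i j hi hj hij
    exact hexch (fun x y => (φ x - 1)^2 * (φ y - 1)^2) i j hi hj hij
  have hql : (∫ ω, q ω ∂ν) = ∫ ω, Z 0 ω ∂ν := by
    have h1 : (∫ ω, q ω ∂ν) = (1/(n:ℝ)) * ∑ i ∈ Finset.range n, ∫ ω, Z i ω ∂ν := by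
      show (∫ ω, (1/(n:ℝ)) * ∑ i ∈ Finset.range n, Z i ω ∂ν) = _
      rw [integral_const_mul, integral_finset_sum _ fun i _ => hiZ1 i]
    rw [h1, Finset.sum_congr rfl (fun i hi => hc_i i (Finset.mem_range.mp hi)),
      Finset.sum_const, Finset.card_range, nsmul_eq_mul]
    field_simp
  have hqql : (∫ ω, q ω * q ω ∂ν)
      = (1/(n:ℝ)) * (∫ ω, Z 0 ω * Z 0 ω ∂ν)
        + (1 - 1/(n:ℝ)) * (∫ ω, Z 0 ω * Z 1 ω ∂ν) := by
    have h1 : (fun ω => q ω * q ω) = fun ω => (1/(n:ℝ))^2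
        * ∑ i ∈ Finset.range n, ∑ j ∈ Finset.range n, Z i ω * Z j ω := by
      funext ω
      show ((1/(n:ℝ)) * ∑ i ∈ Finset.range n, Z i ω)
          * ((1/(n:ℝ)) * ∑ i ∈ Finset.range n, Z i ω) = _
      rw [← Finset.sum_mul_sum (Finset.range n) (Finset.range n)
        (fun i => Z i ω) (fun j => Z j ω)]
      ring
    have h2 : (∫ ω, q ω * q ω ∂ν) = (1/(n:ℝ))^2
        * ∑ i ∈ Finset.range n, ∑ j ∈ Finset.range n, (∫ ω, Z i ω * Z j ω ∂ν) := by
      rw [h1, integral_const_mul,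
        integral_finset_sum _ (fun i _ => integrable_finset_sum _ (fun j _ => hiZ2 i j))]
      congr 1
      exact Finset.sum_congr rfl fun i _ => integral_finset_sum _ (fun j _ => hiZ2 i j)
    rw [h2]
    have h3 : ∀ i ∈ Finset.range n, (∑ j ∈ Finset.range n, ∫ ω, Z i ω * Z j ω ∂ν)
        = (∫ ω, Z 0 ω * Z 0 ω ∂ν) + ((n:ℝ) - 1) * (∫ ω, Z 0 ω * Z 1 ω ∂ν) := by
      intro i hi
      rw [← Finset.add_sum_erase _ _ hi, ha_i i (Finset.mem_range.mp hi)]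
      congr 1
      rw [Finset.sum_congr rfl (fun j hj => hb_ij i j (Finset.mem_range.mp hi)
          (Finset.mem_range.mp (Finset.mem_of_mem_erase hj))
          (Ne.symm (Finset.ne_of_mem_erase hj))),
        Finset.sum_const, Finset.card_erase_of_mem hi, Finset.card_range, nsmul_eq_mul,
        Nat.cast_sub (by omega : 1 ≤ n)]
      norm_num
    rw [Finset.sum_congr rfl h3, Finset.sum_const, Finset.card_range, nsmul_eq_mul]
    field_simp
  have hfe : (fun ω => (q ω - σ2)^2) = fun ω => (q ω * q ω - 2*σ2 * q ω) + σ2^2 :=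
    funext fun ω => by ring
  have part2 : (∫ ω, (q ω - σ2)^2 ∂ν)
      = (1/(n:ℝ)) * (∫ ω, Z 0 ω * Z 0 ω ∂ν) + (1 - 1/(n:ℝ)) * (∫ ω, Z 0 ω * Z 1 ω ∂ν)
        - 2*σ2*(∫ ω, Z 0 ω ∂ν) + σ2^2 := by
    have hsubint : Integrable (fun ω => q ω * q ω - 2*σ2*q ω) ν := by
      exact hqqint.sub (hqint.const_mul _)
    have hmulint : Integrable (fun ω => 2*σ2*q ω) ν := hqint.const_mul _
    rw [hfe, integral_add hsubint (integrable_const _),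
      integral_sub hqqint hmulint, integral_const_mul, integral_const]
    rw [hql, hqql]
    simp only [measure_univ, ENNReal.toReal_one, probReal_univ, one_smul]
  rw [← part2]
  exact part1


theorem stmt_3 {Ω : Type*} [MeasurableSpace Ω] (P : Measure Ω) [IsProbabilityMeasure P]
    (ξ : ℕ → Ω → ℕ) (hmeas : ∀ i, Measurable (ξ i))
    (hindep : iIndepFun ξ P)
    (hident : ∀ i, Measure.map (ξ i) P = Measure.map (ξ 0) P)
    (hmean : ∫ ω, (ξ 0 ω : ℝ) ∂P = 1)
    (hL2 : Integrable (fun ω => ((ξ 0 ω : ℝ)) ^ 2) P)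
    (σ2 : ℝ) (hσ2 : σ2 = variance (fun ω => (ξ 0 ω : ℝ)) P)
    (A : ℕ → Set Ω) (hA : ∀ n, A n = {ω | ∑ i ∈ Finset.range n, ξ i ω = n - 1})
    (hpos : ∀ᶠ n in atTop, 0 < P (A n))
    (hcond : ∀ g : ℕ × ℕ → ℝ, Measurable g →
      Integrable (fun ω => g (ξ 0 ω, ξ 1 ω)) P →
      Tendsto (fun n => ∫ ω, g (ξ 0 ω, ξ 1 ω) ∂(P[|A n])) atTop
        (nhds (∫ ω, g (ξ 0 ω, ξ 1 ω) ∂P)))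
    (k : ℕ) (hk : 1 ≤ k) :
    Tendsto (fun n => ∫ ω,
        ((1 / (n : ℝ)) * ∑ i ∈ Finset.range n,
          ((if ξ i ω ≤ k then (ξ i ω : ℝ) else 0) - 1 + 1 / (n : ℝ)) ^ 2 - σ2) ^ 2
        ∂(P[|A n])) atTop
      (nhds ((∫ ω, ((if ξ 0 ω ≤ k then (ξ 0 ω : ℝ) else 0) - 1) ^ 2 ∂P - σ2) ^ 2)) := by
  classical
  obtain ⟨φ, hφ⟩ : ∃ φ : ℕ → ℝ, ∀ x : ℕ, (if x ≤ k then (x:ℝ) else 0) = φ x :=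
    ⟨_, fun _ => rfl⟩
  simp only [hφ]
  have hφm : Measurable φ := measurable_of_countable φ
  have hk1 : (1:ℝ) ≤ (k:ℝ) := by exact_mod_cast hk
  have hφ_bd : ∀ x, |φ x - 1| ≤ (k:ℝ) := by
    intro x
    rw [← hφ x]
    rcases le_or_gt x k with h | h
    · rw [if_pos h, abs_le]
      constructor
      · have : (0:ℝ) ≤ (x:ℝ) := Nat.cast_nonneg x
        linarith
      · have : (x:ℝ) ≤ (k:ℝ) := Nat.cast_le.mpr h
        linarith
    · rw [if_neg (not_le.mpr h), abs_le]
      constructor <;> linarith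
  have hsq : ∀ x : ℕ, |(φ x - 1)^2| ≤ (k:ℝ)^2 := by
    intro x
    calc |(φ x - 1)^2| = |φ x - 1|^2 := by rw [abs_of_nonneg (sq_nonneg _), sq_abs]
      _ ≤ (k:ℝ)^2 := pow_le_pow_left₀ (abs_nonneg _) (hφ_bd x) 2
  have hjoint := my_jointLaw P ξ hmeas hindep hident
  -- names for the sequences
  set m : ℝ := ∫ ω, (φ (ξ 0 ω) - 1)^2 ∂P with hm
  set F : ℕ → ℝ := fun n => ∫ ω,
      ((1/(n:ℝ)) * ∑ i ∈ Finset.range n, (φ (ξ i ω) - 1 + 1/(n:ℝ))^2 - σ2)^2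
      ∂(P[|A n]) with hF
  set aseq : ℕ → ℝ := fun n =>
    ∫ ω, (φ (ξ 0 ω) - 1)^2 * (φ (ξ 0 ω) - 1)^2 ∂(P[|A n]) with haseq
  set bseq : ℕ → ℝ := fun n =>
    ∫ ω, (φ (ξ 0 ω) - 1)^2 * (φ (ξ 1 ω) - 1)^2 ∂(P[|A n]) with hbseq
  set cseq : ℕ → ℝ := fun n => ∫ ω, (φ (ξ 0 ω) - 1)^2 ∂(P[|A n]) with hcseq
  set main : ℕ → ℝ := fun n =>
    (1/(n:ℝ)) * aseq n + (1 - 1/(n:ℝ)) * bseq n - 2*σ2*cseq n + σ2^2 with hmaindef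
  set C1 : ℝ := (2*(k:ℝ)+1) * (((k:ℝ)+1)^2 + (k:ℝ)^2 + 2*|σ2|) with hC1
  -- integrability facts under P
  have hintP : Integrable (fun ω => (φ (ξ 0 ω) - 1)^2) P :=
    my_integrable_of_bounded P
      (((hφm.comp (hmeas 0)).sub measurable_const).pow_const 2) (fun ω => hsq _)
  have hintP1 : Integrable (fun ω => (φ (ξ 1 ω) - 1)^2) P :=
    my_integrable_of_bounded P
      (((hφm.comp (hmeas 1)).sub measurable_const).pow_const 2) (fun ω => hsq _)
  have hintP2 : Integrable (fun ω => (φ (ξ 0 ω) - 1)^2 * (φ (ξ 1 ω) - 1)^2) P :=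
    my_integrable_of_bounded P
      ((((hφm.comp (hmeas 0)).sub measurable_const).pow_const 2).mul
        (((hφm.comp (hmeas 1)).sub measurable_const).pow_const 2))
      (C := (k:ℝ)^2*(k:ℝ)^2) (fun ω => by
        rw [abs_mul]
        exact mul_le_mul (hsq _) (hsq _) (abs_nonneg _) (by positivity))
  -- limits of cseq and bseq
  have hcs : Tendsto cseq atTop (nhds m) := by
    have h1 := hcond (fun p => (φ p.1 - 1)^2) (measurable_of_countable _) hintP
    exact h1
  have hbP : ∫ ω, (φ (ξ 0 ω) - 1)^2 * (φ (ξ 1 ω) - 1)^2 ∂P = m * m := by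
    have hindep01 : IndepFun (fun ω => (φ (ξ 0 ω) - 1)^2) (fun ω => (φ (ξ 1 ω) - 1)^2) P := by
      have h2 := hindep.indepFun (show (0:ℕ) ≠ 1 by norm_num)
      exact h2.comp (measurable_of_countable (fun x : ℕ => (φ x - 1)^2))
        (measurable_of_countable (fun x : ℕ => (φ x - 1)^2))
    have h4 : ∫ ω, (φ (ξ 0 ω) - 1)^2 * (φ (ξ 1 ω) - 1)^2 ∂P
        = (∫ ω, (φ (ξ 0 ω) - 1)^2 ∂P) * ∫ ω, (φ (ξ 1 ω) - 1)^2 ∂P :=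
      hindep01.integral_mul_eq_mul_integral hintP.aestronglyMeasurable hintP1.aestronglyMeasurable
    rw [h4]
    have htrans : ∫ ω, (φ (ξ 1 ω) - 1)^2 ∂P = ∫ ω, (φ (ξ 0 ω) - 1)^2 ∂P := by
      have hgm : Measurable (fun x : ℕ => (φ x - 1)^2) := measurable_of_countable _
      rw [← integral_map (hmeas 1).aemeasurable hgm.aestronglyMeasurable, hident 1,
        integral_map (hmeas 0).aemeasurable hgm.aestronglyMeasurable]
    rw [htrans, hm]
  have hbs : Tendsto bseq atTop (nhds (m*m)) := by
    have h1 := hcond (fun p => (φ p.1 - 1)^2 * (φ p.2 - 1)^2)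
      (measurable_of_countable _) hintP2
    have h2 : Tendsto bseq atTop
        (nhds (∫ ω, (φ (ξ 0 ω) - 1)^2 * (φ (ξ 1 ω) - 1)^2 ∂P)) := h1
    rwa [hbP] at h2
  -- (1/n) * aseq n → 0
  have t1 : Tendsto (fun n : ℕ => (1/(n:ℝ)) * aseq n) atTop (nhds 0) := by
    apply squeeze_zero_norm' (a := fun n : ℕ => ((k:ℝ)^2*(k:ℝ)^2)/(n:ℝ))
      ?_ (tendsto_const_div_atTop_nhds_zero_nat _)
    filter_upwards [hpos] with n hp
    haveI : IsProbabilityMeasure (P[|A n]) := cond_isProbabilityMeasure hp.ne'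
    have habd : |aseq n| ≤ (k:ℝ)^2*(k:ℝ)^2 := by
      have h1 := norm_integral_le_of_norm_le_const (μ := P[|A n])
        (f := fun ω => (φ (ξ 0 ω) - 1)^2 * (φ (ξ 0 ω) - 1)^2)
        (C := (k:ℝ)^2*(k:ℝ)^2)
        (ae_of_all _ fun ω => by
          rw [Real.norm_eq_abs, abs_mul]
          exact mul_le_mul (hsq _) (hsq _) (abs_nonneg _) (by positivity))
      simpa [measure_univ, Real.norm_eq_abs] using h1
    rw [Real.norm_eq_abs, abs_mul, abs_of_nonneg (show (0:ℝ) ≤ 1/(n:ℝ) by positivity)]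
    calc (1/(n:ℝ)) * |aseq n| ≤ (1/(n:ℝ)) * ((k:ℝ)^2*(k:ℝ)^2) :=
          mul_le_mul_of_nonneg_left habd (by positivity)
      _ = ((k:ℝ)^2*(k:ℝ)^2)/(n:ℝ) := by ring
  -- eventual bound
  have hev : ∀ᶠ n in atTop, ‖F n - main n‖ ≤ C1 / (n:ℝ) := by
    filter_upwards [hpos, eventually_ge_atTop 2] with n hp hn2
    haveI : IsProbabilityMeasure (P[|A n]) := cond_isProbabilityMeasure hp.ne'
    have hexchv : ∀ f : ℕ → ℕ → ℝ, ∀ i j : ℕ, i < n → j < n → i ≠ j →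
        ∫ ω, f (ξ i ω) (ξ j ω) ∂(P[|A n]) = ∫ ω, f (ξ 0 ω) (ξ 1 ω) ∂(P[|A n]) := by
      intro f i j hi hj hij
      show ∫ ω, f (ξ i ω) (ξ j ω) ∂((P (A n))⁻¹ • P.restrict (A n))
          = ∫ ω, f (ξ 0 ω) (ξ 1 ω) ∂((P (A n))⁻¹ • P.restrict (A n))
      rw [integral_smul_measure, integral_smul_measure]
      congr 1
      have h2 := my_exch P ξ hmeas hindep hident hjoint n i j hi hj hij f
      rw [hA n]
      exact h2
    rw [Real.norm_eq_abs]
    exact my_step (P[|A n]) ξ hmeas φ hφm k hk1 hφ_bd σ2 n hn2 hexchv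
  have he : Tendsto (fun n => F n - main n) atTop (nhds 0) :=
    squeeze_zero_norm' hev (tendsto_const_div_atTop_nhds_zero_nat C1)
  have ht2 : Tendsto (fun n : ℕ => 1 - 1/(n:ℝ)) atTop (nhds 1) := by
    have h1 := (tendsto_const_nhds (x := (1:ℝ)) (f := (atTop : Filter ℕ))).sub
      tendsto_one_div_atTop_nhds_zero_nat
    simpa using h1
  have hmaint : Tendsto main atTop (nhds (0 + 1*(m*m) - 2*σ2*m + σ2^2)) := by
    rw [hmaindef]
    exact ((t1.add (ht2.mul hbs)).sub (hcs.const_mul (2*σ2))).add_const (σ2^2)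
  have hfinal : Tendsto F atTop (nhds ((0 + 1*(m*m) - 2*σ2*m + σ2^2) + 0)) := by
    have h1 := hmaint.add he
    exact h1.congr fun n => by ring
  have heq : (0 + 1*(m*m) - 2*σ2*m + σ2^2) + 0 = (m - σ2)^2 := by ring
  rw [heq] at hfinal
  exact hfinal
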